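/- Let a, b ∈ ℝ with a > |b|, set T = √(a² − b²), and let R : ℝ² → ℝ² be the linear map with matrix (1/T)·[[a, −b], [−b, a]]. If γ : [0,1] → ℝ² is a future-directed causal Lipschitz curve with γ(0) = (0,0) and γ(1) = (a,b), then R∘γ is a future-directed causal Lipschitz curve from (0,0) to (T,0) with L(R∘γ) = L(γ) and A(R∘γ) = A(γ), and there exists a Lipschitz function f : [0,T] → ℝ with Lipschitz constant at most 1 and f(0) = f(T) = 0 such that the image of R∘γ equals the graph {(s, f(s)) : s ∈ [0,T]}. -/

import Mathlib

open MeasureTheory Set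

/-- A curve in the Minkowski plane is future-directed causal if, for almost every
`t ∈ [0,1]`, its first derivative dominates the absolute value of its second
derivative and is positive. -/
def IsFDCausal (γ : ℝ → ℝ × ℝ) : Prop :=
  ∀ᵐ t ∂(volume.restrict (Icc (0:ℝ) 1)),
    |deriv (fun s => (γ s).2) t| ≤ deriv (fun s => (γ s).1) t ∧
      0 < deriv (fun s => (γ s).1) t

/-- `γ` is Lipschitz on `[0,1]`. -/
def IsLipCurve (γ : ℝ → ℝ × ℝ) : Prop :=
  ∃ K, LipschitzOnWith K γ (Icc (0:ℝ) 1)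

/-- The Lorentzian length of a curve in the Minkowski plane. -/
noncomputable def lorLength (γ : ℝ → ℝ × ℝ) : ℝ :=
  ∫ t in (0:ℝ)..1,
    Real.sqrt ((deriv (fun s => (γ s).1) t)^2 - (deriv (fun s => (γ s).2) t)^2)

/-- The signed area enclosed by `γ` and the segment joining its endpoints. -/
noncomputable def signedArea (γ : ℝ → ℝ × ℝ) : ℝ :=
  (1/2) * ∫ t in (0:ℝ)..1,
    ((γ t).1 * deriv (fun s => (γ s).2) t - deriv (fun s => (γ s).1) t * (γ t).2)

/-- The Lorentz boost sending `(a,b)` to `(√(a²-b²), 0)`, given by the matrix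
`(1/T)·[[a, −b], [−b, a]]` with `T = √(a²-b²)`. -/
noncomputable def lorentzBoost (a b : ℝ) (p : ℝ × ℝ) : ℝ × ℝ :=
  ((a / Real.sqrt (a^2 - b^2)) * p.1 - (b / Real.sqrt (a^2 - b^2)) * p.2,
   -(b / Real.sqrt (a^2 - b^2)) * p.1 + (a / Real.sqrt (a^2 - b^2)) * p.2)

section Helpers

open Filter Topology

private lemma seq_tendsto_slope {f : ℝ → ℝ} {d x : ℝ} (hf : HasDerivAt f d x) :
    Tendsto (fun n : ℕ => ((n:ℝ)+1) * (f (x + ((n:ℝ)+1)⁻¹) - f x)) atTop (𝓝 d) := by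
  have h1 : Tendsto (fun n : ℕ => ((n:ℝ)+1)⁻¹) atTop (𝓝[≠] 0) := by
    rw [tendsto_nhdsWithin_iff]
    constructor
    · simpa [one_div] using tendsto_one_div_add_atTop_nhds_zero_nat (𝕜 := ℝ)
    · exact Eventually.of_forall fun n => by
        simp only [mem_compl_iff, mem_singleton_iff]
        positivity
  have h2 := (hasDerivAt_iff_tendsto_slope_zero.1 hf).comp h1
  simp only [Function.comp_def, smul_eq_mul, inv_inv] at h2
  exact h2

private lemma lip_ftc {K : NNReal} {g : ℝ → ℝ} (hg : LipschitzWith K g) {p q : ℝ}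
    (hpq : p ≤ q) : ∫ t in p..q, deriv g t = g q - g p := by
  set u : ℕ → ℝ := fun n => ((n:ℝ)+1)⁻¹ with hu
  have hu0 : ∀ n, 0 < u n := fun n => by positivity
  have hgc : Continuous g := hg.continuous
  have hgi : ∀ r s : ℝ, IntervalIntegrable g volume r s := fun r s =>
    hgc.intervalIntegrable r s
  -- limit of (1/h) ∫_r^{r+h} g
  have hlim : ∀ r : ℝ, Tendsto (fun n : ℕ => ((n:ℝ)+1) * ∫ t in r..(r + u n), g t)
      atTop (𝓝 (g r)) := by
    intro r
    have hG : HasDerivAt (fun x => ∫ t in r..x, g t) (g r) r :=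
      intervalIntegral.integral_hasDerivAt_right (hgi r r)
        (hgc.stronglyMeasurable.stronglyMeasurableAtFilter) hgc.continuousAt
    have := seq_tendsto_slope hG
    simpa using this
  -- dominated convergence
  have hconv : Tendsto (fun n : ℕ => ∫ t in Ioc p q, ((n:ℝ)+1) * (g (t + u n) - g t))
      atTop (𝓝 (∫ t in Ioc p q, deriv g t)) := by
    apply tendsto_integral_filter_of_dominated_convergence (fun _ => (K:ℝ))
    · exact Eventually.of_forall fun n =>
        (Continuous.aestronglyMeasurable (by continuity))
    · refine Eventually.of_forall fun n => Eventually.of_forall fun t => ?_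
      have := hg.dist_le_mul (t + u n) t
      rw [Real.dist_eq, Real.dist_eq] at this
      simp only [add_sub_cancel_left] at this
      rw [Real.norm_eq_abs, abs_mul, abs_of_pos (by positivity : (0:ℝ) < (n:ℝ)+1)]
      calc ((n:ℝ)+1) * |g (t + u n) - g t| ≤ ((n:ℝ)+1) * ((K:ℝ) * |u n|) := by
            exact mul_le_mul_of_nonneg_left this (by positivity)
        _ = (K:ℝ) := by
            rw [abs_of_pos (hu0 n)]
            have hn0 : (n:ℝ) + 1 ≠ 0 := by positivity
            show ((n:ℝ)+1) * ((K:ℝ) * ((n:ℝ)+1)⁻¹) = K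
            field_simp
    · exact integrableOn_const measure_Ioc_lt_top.ne
    · apply ae_restrict_of_ae
      filter_upwards [hg.ae_differentiableAt] with t ht
      exact seq_tendsto_slope ht.hasDerivAt
  -- compute the integrals of difference quotients
  have hval : ∀ n : ℕ, ∫ t in Ioc p q, ((n:ℝ)+1) * (g (t + u n) - g t) =
      ((n:ℝ)+1) * ((∫ t in q..(q + u n), g t) - ∫ t in p..(p + u n), g t) := by
    intro n
    rw [← intervalIntegral.integral_of_le hpq, intervalIntegral.integral_const_mul,
      intervalIntegral.integral_sub (Continuous.intervalIntegrable (by continuity) _ _)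
        (hgi _ _)]
    congr 1
    have h1 : (∫ t in p..q, g (t + u n)) = ∫ t in (p + u n)..(q + u n), g t :=
      intervalIntegral.integral_comp_add_right g (u n)
    have h2 : (∫ t in p..(p + u n), g t) + (∫ t in (p + u n)..(q + u n), g t)
        = ∫ t in p..(q + u n), g t :=
      intervalIntegral.integral_add_adjacent_intervals (hgi _ _) (hgi _ _)
    have h3 : (∫ t in p..q, g t) + (∫ t in q..(q + u n), g t)
        = ∫ t in p..(q + u n), g t :=
      intervalIntegral.integral_add_adjacent_intervals (hgi _ _) (hgi _ _)
    rw [h1]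
    linarith
  rw [intervalIntegral.integral_of_le hpq]
  have hconv2 : Tendsto (fun n : ℕ => ∫ t in Ioc p q, ((n:ℝ)+1) * (g (t + u n) - g t))
      atTop (𝓝 (g q - g p)) := by
    have h := (hlim q).sub (hlim p)
    refine Tendsto.congr (fun n => ?_) h
    rw [hval n, mul_sub]
  exact tendsto_nhds_unique hconv hconv2

private lemma lip_mono {K : NNReal} {g : ℝ → ℝ} (hg : LipschitzWith K g)
    (hd : ∀ᵐ t ∂(volume.restrict (Icc (0:ℝ) 1)), 0 ≤ deriv g t)
    {t₁ t₂ : ℝ} (h₁ : t₁ ∈ Icc (0:ℝ) 1) (h₂ : t₂ ∈ Icc (0:ℝ) 1) (h : t₁ ≤ t₂) :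
    g t₁ ≤ g t₂ := by
  have := lip_ftc hg h
  have hnn : 0 ≤ ∫ t in t₁..t₂, deriv g t := by
    rw [intervalIntegral.integral_of_le h]
    apply setIntegral_nonneg_of_ae_restrict
    exact ae_restrict_of_ae_restrict_of_subset
      (Ioc_subset_Icc_self.trans (Icc_subset_Icc h₁.1 h₂.2)) hd
  linarith

private lemma lip_comb {K₁ K₂ : NNReal} {f g : ℝ → ℝ} (hf : LipschitzWith K₁ f)
    (hg : LipschitzWith K₂ g) (p q : ℝ) :
    ∃ K : NNReal, LipschitzWith K (fun t => p * f t + q * g t) := by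
  refine ⟨⟨|p|, abs_nonneg p⟩ * K₁ + ⟨|q|, abs_nonneg q⟩ * K₂,
    LipschitzWith.of_dist_le_mul fun x y => ?_⟩
  have h1 := hf.dist_le_mul x y
  have h2 := hg.dist_le_mul x y
  rw [Real.dist_eq] at h1 h2 ⊢
  have hcoe : ((⟨|p|, abs_nonneg p⟩ * K₁ + ⟨|q|, abs_nonneg q⟩ * K₂ : NNReal) : ℝ)
      = |p| * K₁ + |q| * K₂ := by
    push_cast
    rfl
  rw [hcoe]
  calc |p * f x + q * g x - (p * f y + q * g y)|
      = |p * (f x - f y) + q * (g x - g y)| := by ring_nf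
    _ ≤ |p * (f x - f y)| + |q * (g x - g y)| := abs_add_le _ _
    _ = |p| * |f x - f y| + |q| * |g x - g y| := by rw [abs_mul, abs_mul]
    _ ≤ |p| * ((K₁:ℝ) * dist x y) + |q| * ((K₂:ℝ) * dist x y) :=
        add_le_add (mul_le_mul_of_nonneg_left h1 (abs_nonneg p))
          (mul_le_mul_of_nonneg_left h2 (abs_nonneg q))
    _ = (|p| * K₁ + |q| * K₂) * dist x y := by ring

end Helpers

set_option maxHeartbeats 1000000
/-- a future-directed causal curve from the origin to `(a,b)`, with
`a > |b|`, can be rotated by the Lorentz boost `R` into a future-directed causal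
curve from the origin to `(T,0)` with the same length and area, whose image is the
graph of a `1`-Lipschitz function `f : [0,T] → ℝ` vanishing at the endpoints. -/
theorem causal_curve_graphical (a b : ℝ) (hab : |b| < a)
    (γ : ℝ → ℝ × ℝ) (hLip : IsLipCurve γ) (hCausal : IsFDCausal γ)
    (h0 : γ 0 = (0, 0)) (h1 : γ 1 = (a, b)) :
    IsLipCurve (fun t => lorentzBoost a b (γ t)) ∧
    IsFDCausal (fun t => lorentzBoost a b (γ t)) ∧
    (fun t => lorentzBoost a b (γ t)) 0 = (0, 0) ∧
    (fun t => lorentzBoost a b (γ t)) 1 = (Real.sqrt (a^2 - b^2), 0) ∧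
    lorLength (fun t => lorentzBoost a b (γ t)) = lorLength γ ∧
    signedArea (fun t => lorentzBoost a b (γ t)) = signedArea γ ∧
    ∃ f : ℝ → ℝ, LipschitzOnWith 1 f (Icc 0 (Real.sqrt (a^2 - b^2))) ∧
      f 0 = 0 ∧ f (Real.sqrt (a^2 - b^2)) = 0 ∧
      (fun t => lorentzBoost a b (γ t)) '' (Icc 0 1) =
        (fun s => (s, f s)) '' (Icc 0 (Real.sqrt (a^2 - b^2))) := by
  classical
  obtain ⟨K, hK⟩ := hLip
  have ha : 0 < a := (abs_nonneg b).trans_lt hab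
  have hab2 : 0 < a^2 - b^2 := by nlinarith [sq_abs b, abs_nonneg b]
  set T := Real.sqrt (a^2 - b^2) with hTdef
  have hT : 0 < T := Real.sqrt_pos.2 hab2
  have hT2 : T^2 = a^2 - b^2 := Real.sq_sqrt hab2.le
  set c := a / T with hcdef
  set e := b / T with hedef
  have hLB : ∀ p : ℝ × ℝ, lorentzBoost a b p = (c * p.1 - e * p.2, -e * p.1 + c * p.2) :=
    fun p => rfl
  have hce : c^2 - e^2 = 1 := by
    rw [hcdef, hedef]
    rw [div_pow, div_pow, div_sub_div_same, ← hT2]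
    exact div_self (by positivity)
  have hc : 0 < c := div_pos ha hT
  have he : |e| < c := by
    rw [hedef, hcdef, abs_div, abs_of_pos hT]
    exact div_lt_div_of_pos_right hab hT
  -- boost is Lipschitz
  have hBL : LipschitzWith (⟨|c| + |e|, by positivity⟩ : NNReal) (lorentzBoost a b) := by
    apply LipschitzWith.of_dist_le_mul
    intro p q
    have hD1 : |p.1 - q.1| ≤ dist p q := by
      rw [Prod.dist_eq, ← Real.dist_eq]; exact le_max_left _ _
    have hD2 : |p.2 - q.2| ≤ dist p q := by
      rw [Prod.dist_eq, ← Real.dist_eq]; exact le_max_right _ _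
    rw [hLB p, hLB q, Prod.dist_eq]
    change max _ _ ≤ (|c| + |e|) * dist p q
    dsimp only
    apply max_le
    · rw [Real.dist_eq]
      calc |c * p.1 - e * p.2 - (c * q.1 - e * q.2)|
          = |c * (p.1 - q.1) + (-e) * (p.2 - q.2)| := by ring_nf
        _ ≤ |c * (p.1 - q.1)| + |(-e) * (p.2 - q.2)| := abs_add_le _ _
        _ = |c| * |p.1 - q.1| + |e| * |p.2 - q.2| := by rw [abs_mul, abs_mul, abs_neg]
        _ ≤ |c| * dist p q + |e| * dist p q :=
            add_le_add (mul_le_mul_of_nonneg_left hD1 (abs_nonneg c))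
              (mul_le_mul_of_nonneg_left hD2 (abs_nonneg e))
        _ = (|c| + |e|) * dist p q := by ring
    · rw [Real.dist_eq]
      calc |(-e) * p.1 + c * p.2 - ((-e) * q.1 + c * q.2)|
          = |(-e) * (p.1 - q.1) + c * (p.2 - q.2)| := by ring_nf
        _ ≤ |(-e) * (p.1 - q.1)| + |c * (p.2 - q.2)| := abs_add_le _ _
        _ = |e| * |p.1 - q.1| + |c| * |p.2 - q.2| := by rw [abs_mul, abs_mul, abs_neg]
        _ ≤ |e| * dist p q + |c| * dist p q :=
            add_le_add (mul_le_mul_of_nonneg_left hD1 (abs_nonneg e))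
              (mul_le_mul_of_nonneg_left hD2 (abs_nonneg c))
        _ = (|c| + |e|) * dist p q := by ring
  have hBLip : LipschitzOnWith _ (fun t => lorentzBoost a b (γ t)) (Icc (0:ℝ) 1) :=
    hBL.comp_lipschitzOnWith hK
  -- extensions of the coordinates
  have hK1 : LipschitzOnWith (1 * K) (fun t => (γ t).1) (Icc (0:ℝ) 1) :=
    LipschitzWith.prod_fst.comp_lipschitzOnWith hK
  have hK2 : LipschitzOnWith (1 * K) (fun t => (γ t).2) (Icc (0:ℝ) 1) :=
    LipschitzWith.prod_snd.comp_lipschitzOnWith hK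
  obtain ⟨F₁, hF₁, hEq₁⟩ := hK1.extend_real
  obtain ⟨F₂, hF₂, hEq₂⟩ := hK2.extend_real
  have hEq₁' : ∀ x ∈ Icc (0:ℝ) 1, (γ x).1 = F₁ x := fun x hx => hEq₁ hx
  have hEq₂' : ∀ x ∈ Icc (0:ℝ) 1, (γ x).2 = F₂ x := fun x hx => hEq₂ hx
  -- endpoints
  have hB0 : lorentzBoost a b (γ 0) = (0, 0) := by
    rw [h0, hLB]; simp
  have hB1 : lorentzBoost a b (γ 1) = (T, 0) := by
    rw [h1, hLB]
    have e1 : c * a - e * b = T := by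
      rw [hcdef, hedef]
      field_simp
      linarith [hT2]
    have e2 : -e * a + c * b = 0 := by
      rw [hcdef, hedef]
      field_simp
      ring
    simp only at e1 e2 ⊢
    rw [e1, e2]
  -- almost-everywhere derivative bundle
  have hIoo : ∀ᵐ t ∂(volume.restrict (Icc (0:ℝ) 1)), t ∈ Ioo (0:ℝ) 1 := by
    have h2 : ∀ᵐ t ∂(volume : Measure ℝ), t ∉ ({0, 1} : Set ℝ) :=
      measure_eq_zero_iff_ae_notMem.1 (Set.Finite.measure_zero (by simp) volume)
    filter_upwards [ae_restrict_mem measurableSet_Icc, ae_restrict_of_ae h2] with t h1 h2'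
    simp only [mem_insert_iff, mem_singleton_iff, not_or] at h2'
    exact ⟨h1.1.lt_of_ne (Ne.symm h2'.1), h1.2.lt_of_ne h2'.2⟩
  have hgood : ∀ᵐ t ∂(volume.restrict (Icc (0:ℝ) 1)),
      deriv (fun s => (lorentzBoost a b (γ s)).1) t
        = c * deriv (fun s => (γ s).1) t - e * deriv (fun s => (γ s).2) t ∧
      deriv (fun s => (lorentzBoost a b (γ s)).2) t
        = -e * deriv (fun s => (γ s).1) t + c * deriv (fun s => (γ s).2) t ∧
      0 ≤ deriv (fun s => (c - e) * F₁ s + (c - e) * F₂ s) t ∧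
      0 ≤ deriv (fun s => (c + e) * F₁ s + (-(c + e)) * F₂ s) t ∧
      |deriv (fun s => (γ s).2) t| ≤ deriv (fun s => (γ s).1) t ∧
      0 < deriv (fun s => (γ s).1) t := by
    filter_upwards [hCausal, hIoo, ae_restrict_of_ae hF₁.ae_differentiableAt,
      ae_restrict_of_ae hF₂.ae_differentiableAt] with t hcaus ht hd₁ hd₂
    have hnhds : Icc (0:ℝ) 1 ∈ nhds t := Icc_mem_nhds ht.1 ht.2
    have he₁ : (fun s => (γ s).1) =ᶠ[nhds t] F₁ := Filter.eventually_of_mem hnhds fun x hx => hEq₁ hx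
    have he₂ : (fun s => (γ s).2) =ᶠ[nhds t] F₂ := Filter.eventually_of_mem hnhds fun x hx => hEq₂ hx
    have hdg1 : deriv (fun s => (γ s).1) t = deriv F₁ t := he₁.deriv_eq
    have hdg2 : deriv (fun s => (γ s).2) t = deriv F₂ t := he₂.deriv_eq
    have habs : -(deriv F₁ t) ≤ deriv F₂ t ∧ deriv F₂ t ≤ deriv F₁ t := by
      rw [← hdg1, ← hdg2]; exact abs_le.1 hcaus.1
    have hpos : 0 < deriv F₁ t := by rw [← hdg1]; exact hcaus.2
    have heX : (fun s => (lorentzBoost a b (γ s)).1) =ᶠ[nhds t]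
        (fun s => c * F₁ s - e * F₂ s) := by
      filter_upwards [hnhds] with x hx
      rw [hLB (γ x)]
      simp only
      rw [hEq₁' x hx, hEq₂' x hx]
    have heY : (fun s => (lorentzBoost a b (γ s)).2) =ᶠ[nhds t]
        (fun s => -e * F₁ s + c * F₂ s) := by
      filter_upwards [hnhds] with x hx
      rw [hLB (γ x)]
      simp only
      rw [hEq₁' x hx, hEq₂' x hx]
    have hdX : deriv (fun s => (lorentzBoost a b (γ s)).1) t
        = c * deriv F₁ t - e * deriv F₂ t := by
      rw [heX.deriv_eq]
      exact ((hd₁.hasDerivAt.const_mul c).sub (hd₂.hasDerivAt.const_mul e)).deriv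
    have hdY : deriv (fun s => (lorentzBoost a b (γ s)).2) t
        = -e * deriv F₁ t + c * deriv F₂ t := by
      rw [heY.deriv_eq]
      exact ((hd₁.hasDerivAt.const_mul (-e)).add (hd₂.hasDerivAt.const_mul c)).deriv
    have hdP : deriv (fun s => (c - e) * F₁ s + (c - e) * F₂ s) t
        = (c - e) * deriv F₁ t + (c - e) * deriv F₂ t :=
      ((hd₁.hasDerivAt.const_mul (c - e)).add (hd₂.hasDerivAt.const_mul (c - e))).deriv
    have hdM : deriv (fun s => (c + e) * F₁ s + (-(c + e)) * F₂ s) t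
        = (c + e) * deriv F₁ t + (-(c + e)) * deriv F₂ t :=
      ((hd₁.hasDerivAt.const_mul (c + e)).add (hd₂.hasDerivAt.const_mul (-(c + e)))).deriv
    have heabs := abs_lt.1 he
    refine ⟨by rw [hdX, hdg1, hdg2], by rw [hdY, hdg1, hdg2], ?_, ?_, hcaus.1, hcaus.2⟩
    · rw [hdP]; nlinarith [habs.1, habs.2, heabs.1, heabs.2, hpos]
    · rw [hdM]; nlinarith [habs.1, habs.2, heabs.1, heabs.2, hpos]
  refine ⟨⟨_, hBLip⟩, ?_, ?_, ?_, ?_, ?_, ?_⟩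
  · -- causality
    unfold IsFDCausal
    filter_upwards [hgood] with t h
    obtain ⟨e1, e2, _, _, hc2, hc3⟩ := h
    have heabs := abs_lt.1 he
    have habs := abs_le.1 hc2
    constructor
    · rw [e1, e2, abs_le]
      constructor
      · nlinarith [habs.1, habs.2, heabs.1, heabs.2, hc3]
      · nlinarith [habs.1, habs.2, heabs.1, heabs.2, hc3]
    · rw [e1]
      have h1 : e * deriv (fun s => (γ s).2) t ≤ |e| * deriv (fun s => (γ s).1) t := by
        calc e * deriv (fun s => (γ s).2) t ≤ |e * deriv (fun s => (γ s).2) t| := le_abs_self _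
          _ = |e| * |deriv (fun s => (γ s).2) t| := abs_mul _ _
          _ ≤ |e| * deriv (fun s => (γ s).1) t :=
              mul_le_mul_of_nonneg_left hc2 (abs_nonneg e)
      nlinarith [hc3, he]
  · -- value at 0
    show lorentzBoost a b (γ 0) = (0, 0)
    exact hB0
  · -- value at 1
    show lorentzBoost a b (γ 1) = (T, 0)
    exact hB1
  · -- length
    unfold lorLength
    apply intervalIntegral.integral_congr_ae
    have hg' := (ae_restrict_iff' measurableSet_Icc).1 hgood
    filter_upwards [hg'] with t hQ ht
    have htI : t ∈ Icc (0:ℝ) 1 := Ioc_subset_Icc_self (by rwa [uIoc_of_le zero_le_one] at ht)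
    obtain ⟨e1, e2, _, _, _, _⟩ := hQ htI
    rw [e1, e2]
    congr 1
    linear_combination ((deriv (fun s => (γ s).1) t)^2 - (deriv (fun s => (γ s).2) t)^2) * hce
  · -- area
    unfold signedArea
    congr 1
    apply intervalIntegral.integral_congr_ae
    have hg' := (ae_restrict_iff' measurableSet_Icc).1 hgood
    filter_upwards [hg'] with t hQ ht
    have htI : t ∈ Icc (0:ℝ) 1 := Ioc_subset_Icc_self (by rwa [uIoc_of_le zero_le_one] at ht)
    obtain ⟨e1, e2, _, _, _, _⟩ := hQ htI
    rw [e1, e2, hLB (γ t)]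
    simp only
    linear_combination ((γ t).1 * deriv (fun s => (γ s).2) t
      - deriv (fun s => (γ s).1) t * (γ t).2) * hce
  · -- the graph
    obtain ⟨KP, hKP⟩ := lip_comb hF₁ hF₂ (c - e) (c - e)
    obtain ⟨KM, hKM⟩ := lip_comb hF₁ hF₂ (c + e) (-(c + e))
    have hgPd : ∀ᵐ t ∂(volume.restrict (Icc (0:ℝ) 1)),
        0 ≤ deriv (fun s => (c - e) * F₁ s + (c - e) * F₂ s) t :=
      hgood.mono fun t h => h.2.2.1
    have hgMd : ∀ᵐ t ∂(volume.restrict (Icc (0:ℝ) 1)),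
        0 ≤ deriv (fun s => (c + e) * F₁ s + (-(c + e)) * F₂ s) t :=
      hgood.mono fun t h => h.2.2.2.1
    have hkey : ∀ t₁ ∈ Icc (0:ℝ) 1, ∀ t₂ ∈ Icc (0:ℝ) 1, t₁ ≤ t₂ →
        |(lorentzBoost a b (γ t₂)).2 - (lorentzBoost a b (γ t₁)).2| ≤
          (lorentzBoost a b (γ t₂)).1 - (lorentzBoost a b (γ t₁)).1 := by
      intro t₁ h₁ t₂ h₂ h
      have hP : (c - e) * F₁ t₁ + (c - e) * F₂ t₁ ≤ (c - e) * F₁ t₂ + (c - e) * F₂ t₂ :=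
        lip_mono hKP hgPd h₁ h₂ h
      have hM : (c + e) * F₁ t₁ + (-(c + e)) * F₂ t₁ ≤ (c + e) * F₁ t₂ + (-(c + e)) * F₂ t₂ :=
        lip_mono hKM hgMd h₁ h₂ h
      have eP : ∀ t, t ∈ Icc (0:ℝ) 1 → (c - e) * F₁ t + (c - e) * F₂ t =
          (lorentzBoost a b (γ t)).1 + (lorentzBoost a b (γ t)).2 := by
        intro t ht
        rw [hLB (γ t), ← hEq₁' t ht, ← hEq₂' t ht]
        simp only
        ring
      have eM : ∀ t, t ∈ Icc (0:ℝ) 1 → (c + e) * F₁ t + (-(c + e)) * F₂ t =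
          (lorentzBoost a b (γ t)).1 - (lorentzBoost a b (γ t)).2 := by
        intro t ht
        rw [hLB (γ t), ← hEq₁' t ht, ← hEq₂' t ht]
        simp only
        ring
      rw [eP t₁ h₁, eP t₂ h₂] at hP
      rw [eM t₁ h₁, eM t₂ h₂] at hM
      rw [abs_le]
      constructor <;> linarith
    have hX0 : (lorentzBoost a b (γ 0)).1 = 0 := by rw [hB0]
    have hX1 : (lorentzBoost a b (γ 1)).1 = T := by rw [hB1]
    have hY0 : (lorentzBoost a b (γ 0)).2 = 0 := by rw [hB0]
    have hY1 : (lorentzBoost a b (γ 1)).2 = 0 := by rw [hB1]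
    have h0m : (0:ℝ) ∈ Icc (0:ℝ) 1 := ⟨le_refl 0, zero_le_one⟩
    have h1m : (1:ℝ) ∈ Icc (0:ℝ) 1 := ⟨zero_le_one, le_refl 1⟩
    have hmemX : ∀ t ∈ Icc (0:ℝ) 1, (lorentzBoost a b (γ t)).1 ∈ Icc (0:ℝ) T := by
      intro t ht
      constructor
      · have h := hkey 0 h0m t ht ht.1
        rw [hX0, hY0] at h
        have := abs_nonneg ((lorentzBoost a b (γ t)).2 - 0)
        linarith
      · have h := hkey t ht 1 h1m ht.2
        rw [hX1, hY1] at h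
        have := abs_nonneg (0 - (lorentzBoost a b (γ t)).2)
        linarith
    have hcont : ContinuousOn (fun t => (lorentzBoost a b (γ t)).1) (Icc (0:ℝ) 1) :=
      continuous_fst.comp_continuousOn hBLip.continuousOn
    have hsurj : ∀ s, s ∈ Icc (0:ℝ) T → ∃ t, t ∈ Icc (0:ℝ) 1 ∧
        (lorentzBoost a b (γ t)).1 = s := by
      intro s hs
      have h := intermediate_value_Icc zero_le_one hcont
      simp only [hX0, hX1] at h
      obtain ⟨t, ht, hts⟩ := h hs
      exact ⟨t, ht, hts⟩
    choose! g hg1 hg2 using hsurj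
    have hwell : ∀ t ∈ Icc (0:ℝ) 1, ∀ t' ∈ Icc (0:ℝ) 1,
        (lorentzBoost a b (γ t)).1 = (lorentzBoost a b (γ t')).1 →
        (lorentzBoost a b (γ t)).2 = (lorentzBoost a b (γ t')).2 := by
      intro t ht t' ht' hXX
      rcases le_total t t' with h | h
      · have hk := hkey t ht t' ht' h
        rw [hXX] at hk
        have h0 : |(lorentzBoost a b (γ t')).2 - (lorentzBoost a b (γ t)).2| = 0 :=
          le_antisymm (by linarith) (abs_nonneg _)
        have := abs_eq_zero.1 h0
        linarith
      · have hk := hkey t' ht' t ht h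
        rw [hXX] at hk
        have h0 : |(lorentzBoost a b (γ t)).2 - (lorentzBoost a b (γ t')).2| = 0 :=
          le_antisymm (by linarith) (abs_nonneg _)
        have := abs_eq_zero.1 h0
        linarith
    refine ⟨fun s => (lorentzBoost a b (γ (g s))).2, ?_, ?_, ?_, ?_⟩
    · -- 1-Lipschitz
      rw [lipschitzOnWith_iff_dist_le_mul]
      intro s₁ hs₁ s₂ hs₂
      rw [NNReal.coe_one, one_mul, Real.dist_eq, Real.dist_eq]
      have h₁ := hg1 s₁ hs₁
      have h₂ := hg1 s₂ hs₂
      have hx₁ := hg2 s₁ hs₁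
      have hx₂ := hg2 s₂ hs₂
      rcases le_total (g s₁) (g s₂) with h | h
      · have hk := hkey _ h₁ _ h₂ h
        rw [hx₁, hx₂] at hk
        have hle : s₂ - s₁ ≤ |s₁ - s₂| := by rw [abs_sub_comm]; exact le_abs_self _
        rw [abs_sub_comm]
        have := abs_nonneg ((lorentzBoost a b (γ (g s₂))).2 - (lorentzBoost a b (γ (g s₁))).2)
        linarith
      · have hk := hkey _ h₂ _ h₁ h
        rw [hx₁, hx₂] at hk
        have hle : s₁ - s₂ ≤ |s₁ - s₂| := le_abs_self _
        have := abs_nonneg ((lorentzBoost a b (γ (g s₁))).2 - (lorentzBoost a b (γ (g s₂))).2)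
        linarith
    · -- f 0 = 0
      have h0T : (0:ℝ) ∈ Icc (0:ℝ) T := ⟨le_refl 0, hT.le⟩
      have h := hwell (g 0) (hg1 0 h0T) 0 h0m (by rw [hg2 0 h0T, hX0])
      show (lorentzBoost a b (γ (g 0))).2 = 0
      rw [h, hY0]
    · -- f T = 0
      have hTT : T ∈ Icc (0:ℝ) T := ⟨hT.le, le_refl T⟩
      have h := hwell (g T) (hg1 T hTT) 1 h1m (by rw [hg2 T hTT, hX1])
      show (lorentzBoost a b (γ (g T))).2 = 0
      rw [h, hY1]
    · -- image equality
      apply Subset.antisymm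
      · rintro p ⟨t, ht, rfl⟩
        refine ⟨(lorentzBoost a b (γ t)).1, hmemX t ht, ?_⟩
        have h := hwell (g ((lorentzBoost a b (γ t)).1)) (hg1 _ (hmemX t ht)) t ht
          (hg2 _ (hmemX t ht))
        exact Prod.ext rfl h
      · rintro p ⟨s, hs, rfl⟩
        exact ⟨g s, hg1 s hs, Prod.ext (hg2 s hs) rfl⟩
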